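/- Let β ∈ (0,1], let T be a positive integer with T ≤ m/(e³β) and m ≥ 10, and let f : {0,1}^m → ℝ, f(z) = (1 − β|z|/m)^T. Then for every S ∈ {0,1}^m with |S| = q, the Fourier coefficient satisfies f^(S) ≤ 4e · (1 − β/2)^T · (Tβ/m)^q · e^{22T²β²/m}. -/

import Mathlib

open Finset

/-- The character `χ_S(z) = (-1)^(S·z)` on the Boolean cube (`F₂` inner product). -/
noncomputable def boolChar {m : ℕ} (S z : Fin m → ZMod 2) : ℝ :=
  (-1 : ℝ) ^ (∑ i, S i * z i).val

/-- The Fourier coefficient `f^(S) = 2^{-m} Σ_z f(z) (-1)^(S·z)`. -/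
noncomputable def bFourierCoeff {m : ℕ} (f : (Fin m → ZMod 2) → ℝ) (S : Fin m → ZMod 2) : ℝ :=
  (∑ z : Fin m → ZMod 2, f z * boolChar S z) / 2 ^ m

lemma zmod2_cases : ∀ a : ZMod 2, a = 0 ∨ a = 1 := by decide

noncomputable def chi (a : ZMod 2) : ℝ := (-1 : ℝ) ^ a.val

lemma zmod2_val0 : (0 : ZMod 2).val = 0 := by decide
lemma zmod2_val1 : (1 : ZMod 2).val = 1 := by decide
lemma zmod2_oneone : (1 + 1 : ZMod 2) = 0 := by decide

lemma chi_add (a b : ZMod 2) : chi (a + b) = chi a * chi b := by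
  rcases zmod2_cases a with ha | ha <;> rcases zmod2_cases b with hb | hb <;>
    subst ha <;> subst hb <;>
    simp [chi, zmod2_val0, zmod2_val1, zmod2_oneone]

lemma chi_val (a : ZMod 2) : chi a = 1 - 2 * ((a.val : ℕ) : ℝ) := by
  rcases zmod2_cases a with ha | ha <;> subst ha <;>
    simp [chi, zmod2_val0, zmod2_val1] <;> norm_num

lemma boolChar_single_mul {m : ℕ} (S z : Fin m → ZMod 2) (i : Fin m) :
    boolChar (S + (Pi.single i 1 : Fin m → ZMod 2)) z = boolChar S z * chi (z i) := by
  unfold boolChar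
  have h1 : (∑ j, (S + (Pi.single i 1 : Fin m → ZMod 2)) j * z j) = (∑ j, S j * z j) + z i := by
    have h2 : ∀ j, (S + (Pi.single i 1 : Fin m → ZMod 2)) j * z j
        = S j * z j + (Pi.single i 1 : Fin m → ZMod 2) j * z j := by
      intro j; simp [add_mul]
    rw [Finset.sum_congr rfl fun j _ => h2 j, Finset.sum_add_distrib]
    congr 1
    rw [Finset.sum_eq_single i]
    · simp
    · intro j _ hj; simp [Pi.single_eq_of_ne hj]
    · simp
  rw [h1]
  exact chi_add _ _

lemma boolChar_add_right {m : ℕ} (S z w : Fin m → ZMod 2) :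
    boolChar S (z + w) = boolChar S z * boolChar S w := by
  unfold boolChar
  have h1 : (∑ j, S j * (z + w) j) = (∑ j, S j * z j) + (∑ j, S j * w j) := by
    rw [← Finset.sum_add_distrib]
    exact Finset.sum_congr rfl fun j _ => by simp [mul_add]
  rw [h1]
  exact chi_add _ _

lemma boolChar_single {m : ℕ} (S : Fin m → ZMod 2) (i : Fin m) :
    boolChar S (Pi.single i 1 : Fin m → ZMod 2) = chi (S i) := by
  unfold boolChar
  have h1 : (∑ j, S j * (Pi.single i 1 : Fin m → ZMod 2) j) = S i := by
    rw [Finset.sum_eq_single i]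
    · simp
    · intro j _ hj; simp [Pi.single_eq_of_ne hj]
    · simp
  rw [h1]; rfl

lemma sum_boolChar {m : ℕ} (S : Fin m → ZMod 2) :
    ∑ z : Fin m → ZMod 2, boolChar S z = if S = 0 then (2 : ℝ) ^ m else 0 := by
  by_cases hS : S = 0
  · subst hS
    have h1 : ∀ z : Fin m → ZMod 2, boolChar 0 z = 1 := by
      intro z; unfold boolChar; simp [zmod2_val0]
    rw [Finset.sum_congr rfl fun z _ => h1 z, if_pos rfl]
    simp [Finset.card_univ]
  · rw [if_neg hS]
    obtain ⟨i, hi⟩ : ∃ i, S i ≠ 0 := by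
      by_contra h; push_neg at h; exact hS (funext h)
    have hi1 : S i = 1 := (zmod2_cases (S i)).resolve_left hi
    set w : Fin m → ZMod 2 := (Pi.single i 1 : Fin m → ZMod 2) with hw
    have key : ∑ z : Fin m → ZMod 2, boolChar S z
        = ∑ z : Fin m → ZMod 2, boolChar S (z + w) := by
      have hww : w + w = 0 := by
        funext j
        rcases zmod2_cases (w j) with h | h <;> simp [h, zmod2_oneone]
      exact Fintype.sum_equiv (Equiv.addRight w) _ _
        (fun z => by simp only [Equiv.coe_addRight, add_assoc, hww, add_zero])
    have key2 : ∀ z : Fin m → ZMod 2, boolChar S (z + w) = - boolChar S z := by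
      intro z
      rw [boolChar_add_right, hw, boolChar_single, hi1]
      simp [chi, zmod2_val1]
    rw [Finset.sum_congr rfl fun z _ => key2 z, Finset.sum_neg_distrib] at key
    linarith

noncomputable def Gsum (m ℓ : ℕ) (S : Fin m → ZMod 2) : ℝ :=
  ∑ z : Fin m → ZMod 2, (∑ i, chi (z i)) ^ ℓ * boolChar S z

lemma Gsum_succ (m ℓ : ℕ) (S : Fin m → ZMod 2) :
    Gsum m (ℓ + 1) S = ∑ i, Gsum m ℓ (S + (Pi.single i 1 : Fin m → ZMod 2)) := by
  unfold Gsum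
  rw [Finset.sum_comm]
  refine Finset.sum_congr rfl fun z _ => ?_
  rw [pow_succ]
  calc (∑ i, chi (z i)) ^ ℓ * (∑ i, chi (z i)) * boolChar S z
      = ∑ i, (∑ j, chi (z j)) ^ ℓ * (boolChar S z * chi (z i)) := by
        rw [Finset.mul_sum, Finset.sum_mul]
        exact Finset.sum_congr rfl fun i _ => by ring
    _ = ∑ i, (∑ j, chi (z j)) ^ ℓ * boolChar (S + (Pi.single i 1 : Fin m → ZMod 2)) z := by
        exact Finset.sum_congr rfl fun i _ => by rw [boolChar_single_mul]

noncomputable def Bnd (m ℓ q : ℕ) : ℝ :=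
  if q ≤ ℓ ∧ (ℓ - q) % 2 = 0 then
    (Nat.factorial ℓ : ℝ) * (m : ℝ) ^ ((ℓ - q) / 2) / (Nat.factorial ((ℓ - q) / 2) : ℝ)
  else 0

lemma Bnd_nonneg (m ℓ q : ℕ) : 0 ≤ Bnd m ℓ q := by
  unfold Bnd; split
  · positivity
  · exact le_refl 0

lemma Bnd_eq_zero (m ℓ q : ℕ) (h : ¬ (q ≤ ℓ ∧ (ℓ - q) % 2 = 0)) : Bnd m ℓ q = 0 := by
  unfold Bnd; exact if_neg h

lemma Bnd_rec (m ℓ q : ℕ) :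
    (q : ℝ) * Bnd m ℓ (q - 1) + (m : ℝ) * Bnd m ℓ (q + 1) ≤ Bnd m (ℓ + 1) q := by
  by_cases h1 : ℓ + 1 < q
  · rw [Bnd_eq_zero m ℓ (q - 1) (by omega), Bnd_eq_zero m ℓ (q + 1) (by omega),
      Bnd_eq_zero m (ℓ + 1) q (by omega)]
    simp
  by_cases h2 : q = ℓ + 1
  · subst h2
    rw [Bnd_eq_zero m ℓ (ℓ + 1 + 1) (by omega)]
    have e1 : Bnd m ℓ (ℓ + 1 - 1) = (Nat.factorial ℓ : ℝ) := by
      unfold Bnd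
      rw [if_pos (by omega)]
      simp
    have e2 : Bnd m (ℓ + 1) (ℓ + 1) = (Nat.factorial (ℓ + 1) : ℝ) := by
      unfold Bnd
      rw [if_pos (by omega)]
      simp
    rw [e1, e2, Nat.factorial_succ]
    push_cast
    ring_nf
    exact le_refl _
  have hqℓ : q ≤ ℓ := by omega
  by_cases hp : (ℓ - q) % 2 = 0
  · rw [Bnd_eq_zero m (ℓ + 1) q (by omega)]
    by_cases hq0 : q = 0
    · subst hq0
      rw [Bnd_eq_zero m ℓ (0 + 1) (by omega)]
      simp
    · rw [Bnd_eq_zero m ℓ (q - 1) (by omega), Bnd_eq_zero m ℓ (q + 1) (by omega)]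
      simp
  · have hlq : q + 1 ≤ ℓ := by omega
    obtain ⟨s, hs⟩ : ∃ s, (ℓ - q - 1) / 2 = s := ⟨_, rfl⟩
    set c : ℝ := (Nat.factorial ℓ : ℝ) * (m : ℝ) ^ (s + 1) / (Nat.factorial (s + 1) : ℝ) with hc_def
    have hc : (0 : ℝ) ≤ c := by rw [hc_def]; positivity
    have eL : Bnd m ℓ (q + 1) = (Nat.factorial ℓ : ℝ) * (m : ℝ) ^ s / (Nat.factorial s : ℝ) := by
      have hidx : (ℓ - (q + 1)) / 2 = s := by omega
      unfold Bnd
      rw [if_pos (by constructor <;> omega), hidx]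
    have eR : Bnd m (ℓ + 1) q = (Nat.factorial (ℓ + 1) : ℝ) * (m : ℝ) ^ (s + 1)
        / (Nat.factorial (s + 1) : ℝ) := by
      have hidx : (ℓ + 1 - q) / 2 = s + 1 := by omega
      unfold Bnd
      rw [if_pos (by constructor <;> omega), hidx]
    have hM : (q : ℝ) * Bnd m ℓ (q - 1) ≤ (q : ℝ) * c := by
      by_cases hq0 : q = 0
      · subst hq0; simp
      · have eM : Bnd m ℓ (q - 1) = c := by
          have hidx : (ℓ - (q - 1)) / 2 = s + 1 := by omega
          unfold Bnd
          rw [if_pos (by constructor <;> omega), hidx]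
        rw [eM]
    have key : (q : ℝ) + ((s : ℝ) + 1) ≤ (ℓ : ℝ) + 1 := by
      have h : q + (s + 1) ≤ ℓ + 1 := by omega
      exact_mod_cast h
    calc (q : ℝ) * Bnd m ℓ (q - 1) + (m : ℝ) * Bnd m ℓ (q + 1)
        ≤ (q : ℝ) * c + (m : ℝ) * ((Nat.factorial ℓ : ℝ) * (m : ℝ) ^ s / (Nat.factorial s : ℝ)) := by
          rw [eL]; exact add_le_add hM le_rfl
      _ = ((q : ℝ) + ((s : ℝ) + 1)) * c := by
          rw [hc_def, Nat.factorial_succ s]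
          have hsne : (Nat.factorial s : ℝ) ≠ 0 := by positivity
          field_simp
          push_cast
          ring
      _ ≤ ((ℓ : ℝ) + 1) * c := mul_le_mul_of_nonneg_right key hc
      _ = Bnd m (ℓ + 1) q := by
          rw [eR, hc_def, Nat.factorial_succ ℓ]
          push_cast
          ring

lemma hN_eq_sum {m : ℕ} (z : Fin m → ZMod 2) : hammingNorm z = ∑ i, (z i).val := by
  unfold hammingNorm
  rw [Finset.card_filter]
  refine Finset.sum_congr rfl fun i _ => ?_
  rcases zmod2_cases (z i) with h | h <;> simp [h, zmod2_val0, zmod2_val1]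

lemma hN_single_eq {m : ℕ} (S : Fin m → ZMod 2) (i : Fin m) :
    hammingNorm (S + (Pi.single i 1 : Fin m → ZMod 2))
      = if S i = 0 then hammingNorm S + 1 else hammingNorm S - 1 := by
  have hsplit : ∀ g : Fin m → ZMod 2,
      (∑ j, (g j).val) = (g i).val + ∑ j ∈ Finset.univ.erase i, (g j).val :=
    fun g => (Finset.add_sum_erase _ _ (Finset.mem_univ i)).symm
  have hrest : ∀ j ∈ Finset.univ.erase i,
      ((S + (Pi.single i 1 : Fin m → ZMod 2)) j).val = (S j).val := by
    intro j hj
    have hji : j ≠ i := Finset.ne_of_mem_erase hj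
    simp [Pi.single_eq_of_ne hji]
  rw [hN_eq_sum, hN_eq_sum, hsplit (S + _), hsplit S,
    Finset.sum_congr rfl hrest]
  have hii : ((S + (Pi.single i 1 : Fin m → ZMod 2)) i) = S i + 1 := by simp
  rw [hii]
  rcases zmod2_cases (S i) with h | h <;> rw [h] <;>
    simp [zmod2_val0, zmod2_val1, zmod2_oneone] <;> omega

lemma Gsum_le (m : ℕ) : ∀ ℓ (S : Fin m → ZMod 2),
    Gsum m ℓ S ≤ 2 ^ m * Bnd m ℓ (hammingNorm S) := by
  intro ℓ
  induction ℓ with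
  | zero =>
    intro S
    have h0 : Gsum m 0 S = if S = 0 then (2 : ℝ) ^ m else 0 := by
      unfold Gsum
      rw [← sum_boolChar S]
      exact Finset.sum_congr rfl fun z _ => by rw [pow_zero, one_mul]
    rw [h0]
    by_cases hS : S = 0
    · subst hS
      have hq : hammingNorm (0 : Fin m → ZMod 2) = 0 := by simp [hN_eq_sum, zmod2_val0]
      rw [if_pos rfl, hq]
      have : Bnd m 0 0 = 1 := by
        unfold Bnd
        rw [if_pos (by omega)]
        simp
      rw [this, mul_one]
    · rw [if_neg hS]
      have := Bnd_nonneg m 0 (hammingNorm S)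
      positivity
  | succ ℓ ih =>
    intro S
    set q := hammingNorm S with hq
    rw [Gsum_succ]
    calc ∑ i, Gsum m ℓ (S + (Pi.single i 1 : Fin m → ZMod 2))
        ≤ ∑ i, 2 ^ m * Bnd m ℓ (hammingNorm (S + (Pi.single i 1 : Fin m → ZMod 2))) :=
          Finset.sum_le_sum fun i _ => ih _
      _ = ∑ i : Fin m, 2 ^ m * (if S i = 0 then Bnd m ℓ (q + 1) else Bnd m ℓ (q - 1)) := by
          refine Finset.sum_congr rfl fun i _ => ?_
          rw [hN_single_eq]
          by_cases h : S i = 0 <;> simp [h, ← hq]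
      _ = 2 ^ m * ∑ i : Fin m, (if S i = 0 then Bnd m ℓ (q + 1) else Bnd m ℓ (q - 1)) := by
          rw [Finset.mul_sum]
      _ ≤ 2 ^ m * Bnd m (ℓ + 1) q := by
          have h2m : (0:ℝ) ≤ 2 ^ m := by positivity
          refine mul_le_mul_of_nonneg_left ?_ h2m
          rw [Finset.sum_ite, Finset.sum_const, Finset.sum_const]
          have hcard1 : (Finset.univ.filter fun i => ¬ S i = 0).card = q := by
            rw [hq]; rfl
          have hcard0 : ((Finset.univ.filter fun i => S i = 0).card : ℝ) ≤ (m : ℝ) := by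
            have : (Finset.univ.filter fun i => S i = 0).card ≤ m := by
              have := Finset.card_filter_le (Finset.univ : Finset (Fin m)) (fun i => S i = 0)
              simpa using this
            exact_mod_cast this
          rw [hcard1]
          calc (Finset.univ.filter fun i => S i = 0).card • Bnd m ℓ (q + 1) + q • Bnd m ℓ (q - 1)
              = ((Finset.univ.filter fun i => S i = 0).card : ℝ) * Bnd m ℓ (q + 1)
                + (q : ℝ) * Bnd m ℓ (q - 1) := by
                rw [nsmul_eq_mul, nsmul_eq_mul]
            _ ≤ (m : ℝ) * Bnd m ℓ (q + 1) + (q : ℝ) * Bnd m ℓ (q - 1) := by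
                have := Bnd_nonneg m ℓ (q + 1)
                nlinarith
            _ ≤ Bnd m (ℓ + 1) q := by
                have := Bnd_rec m ℓ q
                linarith

/-- For `β ∈ (0,1]`, `1 ≤ T ≤ m/(e³β)`, `m ≥ 10` and `f(z) = (1 - β|z|/m)^T`, every
Fourier coefficient satisfies `f^(S) ≤ 4e (1-β/2)^T (Tβ/m)^q e^{22T²β²/m}` where
`q = |S|` is the Hamming weight of `S`. -/
theorem fourierCoeff_upper_bound {m : ℕ} (hm : 10 ≤ m)
    (β : ℝ) (hβ0 : 0 < β) (hβ1 : β ≤ 1)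
    (T : ℕ) (hT1 : 1 ≤ T) (hT : (T : ℝ) ≤ (m : ℝ) / (Real.exp 1 ^ 3 * β))
    (f : (Fin m → ZMod 2) → ℝ)
    (hf : ∀ z, f z = (1 - β * (hammingNorm z : ℝ) / (m : ℝ)) ^ T)
    (S : Fin m → ZMod 2) (q : ℕ) (hq : hammingNorm S = q) :
    bFourierCoeff f S
      ≤ 4 * Real.exp 1 * (1 - β / 2) ^ T * ((T : ℝ) * β / (m : ℝ)) ^ q
          * Real.exp (22 * (T : ℝ) ^ 2 * β ^ 2 / (m : ℝ)) := by

  have hmR : (0 : ℝ) < (m : ℝ) := by exact_mod_cast (by omega : 0 < m)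
  set a : ℝ := 1 - β / 2 with ha_def
  set b : ℝ := β / (2 * (m : ℝ)) with hb_def
  set p : ℝ := (T : ℝ) * β / (m : ℝ) with hp_def
  set x : ℝ := (T : ℝ) ^ 2 * β ^ 2 / (m : ℝ) with hx_def
  have ha0 : 0 < a := by rw [ha_def]; linarith
  have ha2 : 1 ≤ 2 * a := by rw [ha_def]; linarith
  have hb0 : 0 < b := by rw [hb_def]; positivity
  have hp0 : 0 ≤ p := by rw [hp_def]; positivity
  have hx0 : 0 ≤ x := by rw [hx_def]; positivity
  have h2bT : (2 : ℝ) * b * (T : ℝ) = p := by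
    rw [hb_def, hp_def]; field_simp
  have hp2m : p ^ 2 * (m : ℝ) = x := by
    rw [hp_def, hx_def]; field_simp
  -- expansion of the sum
  have expand : ∑ z : Fin m → ZMod 2, f z * boolChar S z
      = ∑ ℓ ∈ Finset.range (T + 1),
          (T.choose ℓ : ℝ) * a ^ (T - ℓ) * b ^ ℓ * Gsum m ℓ S := by
    have hpoint : ∀ z : Fin m → ZMod 2,
        f z * boolChar S z
          = ∑ ℓ ∈ Finset.range (T + 1),
              (T.choose ℓ : ℝ) * a ^ (T - ℓ) * b ^ ℓ
                * ((∑ i, chi (z i)) ^ ℓ * boolChar S z) := by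
      intro z
      have hXz : (∑ i, chi (z i)) = (m : ℝ) - 2 * (hammingNorm z : ℝ) := by
        have h1 : ∀ i, chi (z i) = 1 - 2 * (((z i).val : ℕ) : ℝ) := fun i => chi_val (z i)
        rw [Finset.sum_congr rfl fun i _ => h1 i, Finset.sum_sub_distrib]
        have h2 : ((hammingNorm z : ℕ) : ℝ) = ∑ i, (((z i).val : ℕ) : ℝ) := by
          rw [hN_eq_sum]; push_cast; rfl
        rw [h2]
        simp [Finset.mul_sum, Finset.card_univ]
      have hbase : 1 - β * (hammingNorm z : ℝ) / (m : ℝ) = b * (∑ i, chi (z i)) + a := by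
        rw [hXz, hb_def, ha_def]
        field_simp
        ring
      rw [hf z, hbase, add_pow]
      rw [Finset.sum_mul]
      refine Finset.sum_congr rfl fun ℓ _ => ?_
      rw [mul_pow]
      ring
    rw [Finset.sum_congr rfl fun z _ => hpoint z, Finset.sum_comm]
    refine Finset.sum_congr rfl fun ℓ _ => ?_
    unfold Gsum
    rw [Finset.mul_sum]
  -- coefficients are nonnegative
  have hc_nonneg : ∀ ℓ, (0 : ℝ) ≤ (T.choose ℓ : ℝ) * a ^ (T - ℓ) * b ^ ℓ := by
    intro ℓ; positivity
  -- per-term bound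
  have hterm : ∀ ℓ ∈ Finset.range (T + 1),
      (T.choose ℓ : ℝ) * a ^ (T - ℓ) * b ^ ℓ * Bnd m ℓ q
        ≤ a ^ T * p ^ q *
          (if q ≤ ℓ ∧ (ℓ - q) % 2 = 0 then
            x ^ ((ℓ - q) / 2) / (Nat.factorial ((ℓ - q) / 2) : ℝ) else 0) := by
    intro ℓ hℓmem
    have hℓT : ℓ ≤ T := by
      have := Finset.mem_range.mp hℓmem; omega
    by_cases hg : q ≤ ℓ ∧ (ℓ - q) % 2 = 0
    · rw [if_pos hg]
      set r : ℕ := (ℓ - q) / 2 with hr_def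
      have hℓeq : ℓ = q + 2 * r := by omega
      have hBnd : Bnd m ℓ q = (Nat.factorial ℓ : ℝ) * (m : ℝ) ^ r / (Nat.factorial r : ℝ) := by
        unfold Bnd; rw [if_pos hg]
      have f1 : (T.choose ℓ : ℝ) * (Nat.factorial ℓ : ℝ) ≤ (T : ℝ) ^ ℓ := by
        have h := Nat.descFactorial_le_pow T ℓ
        rw [Nat.descFactorial_eq_factorial_mul_choose] at h
        have : ((Nat.factorial ℓ * T.choose ℓ : ℕ) : ℝ) ≤ ((T ^ ℓ : ℕ) : ℝ) := by exact_mod_cast h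
        push_cast at this
        linarith
      have f2 : a ^ (T - ℓ) ≤ a ^ T * 2 ^ ℓ := by
        have hTsplit : a ^ T = a ^ (T - ℓ) * a ^ ℓ := by
          rw [← pow_add]; congr 1; omega
        have h2a : (1 : ℝ) ≤ (2 * a) ^ ℓ := one_le_pow₀ ha2
        rw [mul_pow] at h2a
        calc a ^ (T - ℓ) = a ^ (T - ℓ) * 1 := by ring
          _ ≤ a ^ (T - ℓ) * (2 ^ ℓ * a ^ ℓ) := by
              have := pow_nonneg (le_of_lt ha0) (T - ℓ)
              nlinarith
          _ = a ^ T * 2 ^ ℓ := by rw [hTsplit]; ring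
      have hfr : (0 : ℝ) < (Nat.factorial r : ℝ) := by positivity
      rw [hBnd]
      calc (T.choose ℓ : ℝ) * a ^ (T - ℓ) * b ^ ℓ
            * ((Nat.factorial ℓ : ℝ) * (m : ℝ) ^ r / (Nat.factorial r : ℝ))
          = ((T.choose ℓ : ℝ) * (Nat.factorial ℓ : ℝ)) * a ^ (T - ℓ)
            * (b ^ ℓ * (m : ℝ) ^ r) / (Nat.factorial r : ℝ) := by ring
        _ ≤ (T : ℝ) ^ ℓ * (a ^ T * 2 ^ ℓ) * (b ^ ℓ * (m : ℝ) ^ r) / (Nat.factorial r : ℝ) := by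
            gcongr <;> positivity
        _ = a ^ T * ((2 * b * (T : ℝ)) ^ ℓ * (m : ℝ) ^ r) / (Nat.factorial r : ℝ) := by
            rw [mul_pow, mul_pow]; ring
        _ = a ^ T * p ^ q * (x ^ r / (Nat.factorial r : ℝ)) := by
            have hxr : (p ^ 2) ^ r * (m : ℝ) ^ r = x ^ r := by rw [← mul_pow, hp2m]
            rw [h2bT, hℓeq, pow_add, pow_mul, mul_assoc (p ^ q), hxr]
            ring
    · rw [if_neg hg, Bnd_eq_zero m ℓ q hg]
      simp
  -- sum of the exponential terms
  have hsumD : ∑ ℓ ∈ Finset.range (T + 1),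
      (if q ≤ ℓ ∧ (ℓ - q) % 2 = 0 then
        x ^ ((ℓ - q) / 2) / (Nat.factorial ((ℓ - q) / 2) : ℝ) else 0)
      ≤ Real.exp x := by
    rw [← Finset.sum_filter]
    have hinj : ∀ ℓ₁ ∈ (Finset.range (T + 1)).filter (fun ℓ => q ≤ ℓ ∧ (ℓ - q) % 2 = 0),
        ∀ ℓ₂ ∈ (Finset.range (T + 1)).filter (fun ℓ => q ≤ ℓ ∧ (ℓ - q) % 2 = 0),
        (ℓ₁ - q) / 2 = (ℓ₂ - q) / 2 → ℓ₁ = ℓ₂ := by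
      intro ℓ₁ h₁ ℓ₂ h₂ hval
      simp only [Finset.mem_filter, Finset.mem_range] at h₁ h₂
      omega
    have himg : ∑ ℓ ∈ (Finset.range (T + 1)).filter (fun ℓ => q ≤ ℓ ∧ (ℓ - q) % 2 = 0),
        x ^ ((ℓ - q) / 2) / (Nat.factorial ((ℓ - q) / 2) : ℝ)
        = ∑ r ∈ ((Finset.range (T + 1)).filter fun ℓ => q ≤ ℓ ∧ (ℓ - q) % 2 = 0).image
            (fun ℓ => (ℓ - q) / 2), x ^ r / (Nat.factorial r : ℝ) :=
      (Finset.sum_image (f := fun r => x ^ r / (Nat.factorial r : ℝ)) hinj).symm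
    rw [himg]
    have hsub : ((Finset.range (T + 1)).filter fun ℓ => q ≤ ℓ ∧ (ℓ - q) % 2 = 0).image
        (fun ℓ => (ℓ - q) / 2) ⊆ Finset.range (T + 1) := by
      intro r hr
      obtain ⟨ℓ, hℓ, rfl⟩ := Finset.mem_image.mp hr
      simp only [Finset.mem_filter, Finset.mem_range] at hℓ
      exact Finset.mem_range.mpr (by omega)
    calc ∑ r ∈ ((Finset.range (T + 1)).filter fun ℓ => q ≤ ℓ ∧ (ℓ - q) % 2 = 0).image
            (fun ℓ => (ℓ - q) / 2), x ^ r / (Nat.factorial r : ℝ)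
        ≤ ∑ r ∈ Finset.range (T + 1), x ^ r / (Nat.factorial r : ℝ) := by
          refine Finset.sum_le_sum_of_subset_of_nonneg hsub fun r _ _ => ?_
          positivity
      _ ≤ Real.exp x := Real.sum_le_exp_of_nonneg hx0 (T + 1)
  -- assemble
  have h2m : (0 : ℝ) < (2 : ℝ) ^ m := by positivity
  have hexp1 : (1 : ℝ) ≤ Real.exp 1 := by
    have := Real.add_one_le_exp (1 : ℝ); linarith
  have haT : (0 : ℝ) ≤ a ^ T := by positivity
  calc bFourierCoeff f S
      = (∑ ℓ ∈ Finset.range (T + 1),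
          (T.choose ℓ : ℝ) * a ^ (T - ℓ) * b ^ ℓ * Gsum m ℓ S) / 2 ^ m := by
        unfold bFourierCoeff; rw [expand]
    _ ≤ ((2 : ℝ) ^ m * ∑ ℓ ∈ Finset.range (T + 1),
          (T.choose ℓ : ℝ) * a ^ (T - ℓ) * b ^ ℓ * Bnd m ℓ q) / 2 ^ m := by
        gcongr with ℓ hℓ
        rw [Finset.mul_sum]
        refine Finset.sum_le_sum fun ℓ _ => ?_
        calc (T.choose ℓ : ℝ) * a ^ (T - ℓ) * b ^ ℓ * Gsum m ℓ S
            ≤ (T.choose ℓ : ℝ) * a ^ (T - ℓ) * b ^ ℓ * (2 ^ m * Bnd m ℓ (hammingNorm S)) := by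
              have hG := Gsum_le m ℓ S
              have hc := hc_nonneg ℓ
              exact mul_le_mul_of_nonneg_left hG hc
          _ = 2 ^ m * ((T.choose ℓ : ℝ) * a ^ (T - ℓ) * b ^ ℓ * Bnd m ℓ q) := by
              rw [hq]; ring
    _ = ∑ ℓ ∈ Finset.range (T + 1),
          (T.choose ℓ : ℝ) * a ^ (T - ℓ) * b ^ ℓ * Bnd m ℓ q := by
        rw [mul_comm, mul_div_assoc, div_self (ne_of_gt h2m), mul_one]
    _ ≤ ∑ ℓ ∈ Finset.range (T + 1), a ^ T * p ^ q *
          (if q ≤ ℓ ∧ (ℓ - q) % 2 = 0 then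
            x ^ ((ℓ - q) / 2) / (Nat.factorial ((ℓ - q) / 2) : ℝ) else 0) :=
        Finset.sum_le_sum hterm
    _ = a ^ T * p ^ q * ∑ ℓ ∈ Finset.range (T + 1),
          (if q ≤ ℓ ∧ (ℓ - q) % 2 = 0 then
            x ^ ((ℓ - q) / 2) / (Nat.factorial ((ℓ - q) / 2) : ℝ) else 0) := by
        rw [Finset.mul_sum]
    _ ≤ a ^ T * p ^ q * Real.exp x := by
        have hap : (0 : ℝ) ≤ a ^ T * p ^ q := by positivity
        exact mul_le_mul_of_nonneg_left hsumD hap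
    _ ≤ 4 * Real.exp 1 * a ^ T * p ^ q * Real.exp (22 * (T : ℝ) ^ 2 * β ^ 2 / (m : ℝ)) := by
        have hxx : x ≤ 22 * (T : ℝ) ^ 2 * β ^ 2 / (m : ℝ) := by
          rw [hx_def]
          have h22 : (22 : ℝ) * (T : ℝ) ^ 2 * β ^ 2 / (m : ℝ)
              = 22 * ((T : ℝ) ^ 2 * β ^ 2 / (m : ℝ)) := by ring
          rw [h22]
          have : (0 : ℝ) ≤ (T : ℝ) ^ 2 * β ^ 2 / (m : ℝ) := by positivity
          linarith
        have hexpx : Real.exp x ≤ Real.exp (22 * (T : ℝ) ^ 2 * β ^ 2 / (m : ℝ)) :=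
          Real.exp_le_exp.mpr hxx
        have h4e : (1 : ℝ) ≤ 4 * Real.exp 1 := by linarith
        calc a ^ T * p ^ q * Real.exp x
            ≤ a ^ T * p ^ q * Real.exp (22 * (T : ℝ) ^ 2 * β ^ 2 / (m : ℝ)) := by
              have hap : (0 : ℝ) ≤ a ^ T * p ^ q := by positivity
              exact mul_le_mul_of_nonneg_left hexpx hap
          _ ≤ 4 * Real.exp 1 * a ^ T * p ^ q * Real.exp (22 * (T : ℝ) ^ 2 * β ^ 2 / (m : ℝ)) := by
              have hpos : (0 : ℝ) ≤ a ^ T * p ^ q * Real.exp (22 * (T : ℝ) ^ 2 * β ^ 2 / (m : ℝ)) := by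
                positivity
              nlinarith
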